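/- Let F ⊆ ([n] choose k) be an intersecting family, U ⊆ [n], and A, B ⊆ U disjoint. If n ≥ 2k − |A| − |B| + |U|, then f_A / C(n−|U|, k−|A|) + f_B / C(n−|U|, k−|B|) ≤ 1, where f_S is the number of F ∈ F with F ∩ U = S. -/

import Mathlib

open Finset

lemma cross_count (V : Finset ℕ) (a b : ℕ) (𝒜 : Finset (Finset ℕ))
    (h : 𝒜 ⊆ V.powersetCard a) :
    ((𝒜 ×ˢ V.powersetCard b).filter (fun p => Disjoint p.1 p.2)).card
      = 𝒜.card * (V.card - a).choose b := by
  rw [Finset.card_filter, Finset.sum_product]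
  have key : ∀ S ∈ 𝒜, (∑ T ∈ V.powersetCard b, if Disjoint S T then 1 else 0)
      = (V.card - a).choose b := by
    intro S hS
    have hSV : S ⊆ V ∧ S.card = a := by
      simpa [Finset.mem_powersetCard] using h hS
    rw [← Finset.card_filter]
    have : (V.powersetCard b).filter (fun T => Disjoint S T) = (V \ S).powersetCard b := by
      ext T
      simp only [Finset.mem_filter, Finset.mem_powersetCard, Finset.subset_sdiff]
      constructor
      · rintro ⟨⟨h1, h2⟩, h3⟩; exact ⟨⟨h1, h3.symm⟩, h2⟩
      · rintro ⟨⟨h1, h3⟩, h2⟩; exact ⟨⟨h1, h2⟩, h3.symm⟩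
    rw [this, Finset.card_powersetCard, Finset.card_sdiff_of_subset hSV.1, hSV.2]
  rw [Finset.sum_congr rfl key, Finset.sum_const, smul_eq_mul]

lemma cross_count' (V : Finset ℕ) (a b : ℕ) (ℬ : Finset (Finset ℕ))
    (h : ℬ ⊆ V.powersetCard b) :
    ((V.powersetCard a ×ˢ ℬ).filter (fun p => Disjoint p.1 p.2)).card
      = ℬ.card * (V.card - b).choose a := by
  rw [← cross_count V b a ℬ h]
  apply Finset.card_nbij' Prod.swap Prod.swap
  · intro p hp
    simp only [Finset.mem_coe, Finset.mem_filter, Finset.mem_product] at *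
    exact ⟨⟨hp.1.2, hp.1.1⟩, hp.2.symm⟩
  · intro p hp
    simp only [Finset.mem_coe, Finset.mem_filter, Finset.mem_product] at *
    exact ⟨⟨hp.1.2, hp.1.1⟩, hp.2.symm⟩
  · intro p _; rfl
  · intro p _; rfl

lemma cross_ineq (V : Finset ℕ) (a b : ℕ) (𝒜 ℬ : Finset (Finset ℕ))
    (h𝒜 : 𝒜 ⊆ V.powersetCard a) (hℬ : ℬ ⊆ V.powersetCard b)
    (hx : ∀ S ∈ 𝒜, ∀ T ∈ ℬ, (S ∩ T).Nonempty)
    (hab : a + b ≤ V.card) :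
    (𝒜.card : ℚ) / (V.card.choose a) + (ℬ.card : ℚ) / (V.card.choose b) ≤ 1 := by
  set m := V.card with hm
  -- the big counting sets
  set P := ((V.powersetCard a ×ˢ V.powersetCard b).filter (fun p => Disjoint p.1 p.2)) with hP
  set PA := ((𝒜 ×ˢ V.powersetCard b).filter (fun p => Disjoint p.1 p.2)) with hPA
  set PB := ((V.powersetCard a ×ˢ ℬ).filter (fun p => Disjoint p.1 p.2)) with hPB
  have hPAsub : PA ⊆ P := by
    intro p hp
    simp only [hPA, hP, Finset.mem_filter, Finset.mem_product] at hp ⊢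
    exact ⟨⟨h𝒜 hp.1.1, hp.1.2⟩, hp.2⟩
  have hPBsub : PB ⊆ P := by
    intro p hp
    simp only [hPB, hP, Finset.mem_filter, Finset.mem_product] at hp ⊢
    exact ⟨⟨hp.1.1, hℬ hp.1.2⟩, hp.2⟩
  have hdisj : Disjoint PA PB := by
    rw [Finset.disjoint_left]
    intro p hpa hpb
    simp only [hPA, hPB, Finset.mem_filter, Finset.mem_product] at hpa hpb
    obtain ⟨z, hz⟩ := hx p.1 hpa.1.1 p.2 hpb.1.2
    rw [Finset.mem_inter] at hz
    exact absurd hz.2 (Finset.disjoint_left.mp hpa.2 hz.1)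
  have hcard : PA.card + PB.card ≤ P.card := by
    rw [← Finset.card_union_of_disjoint hdisj]
    exact Finset.card_le_card (Finset.union_subset hPAsub hPBsub)
  rw [cross_count V a b 𝒜 h𝒜, cross_count' V a b ℬ hℬ,
    cross_count V a b (V.powersetCard a) Finset.Subset.rfl,
    Finset.card_powersetCard] at hcard
  -- choose identities
  have hid1 : m.choose a * (m - a).choose b = m.choose (a+b) * (a+b).choose a := by
    rw [Nat.choose_mul (Nat.le_add_right a b), Nat.add_sub_cancel_left]
  have hid2 : m.choose b * (m - b).choose a = m.choose (a+b) * (a+b).choose b := by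
    rw [Nat.choose_mul (Nat.le_add_left b a), Nat.add_sub_cancel]
  have hid : m.choose a * (m - a).choose b = m.choose b * (m - b).choose a := by
    rw [hid1, hid2, Nat.choose_symm_add]
  have hca : 0 < m.choose a := Nat.choose_pos (le_trans (Nat.le_add_right a b) hab)
  have hcb : 0 < m.choose b := Nat.choose_pos (le_trans (Nat.le_add_left b a) hab)
  have hd1 : 0 < (m - a).choose b := Nat.choose_pos (by omega)
  have hd2 : 0 < (m - b).choose a := Nat.choose_pos (by omega)
  have e1 : (𝒜.card : ℚ) / (m.choose a)
      = (𝒜.card * (m - a).choose b : ℚ) / (m.choose a * (m - a).choose b) := by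
    rw [mul_div_mul_right]
    exact_mod_cast hd1.ne'
  have e2 : (ℬ.card : ℚ) / (m.choose b)
      = (ℬ.card * (m - b).choose a : ℚ) / (m.choose b * (m - b).choose a) := by
    rw [mul_div_mul_right]
    exact_mod_cast hd2.ne'
  have hc : ((m.choose b : ℚ)) * ((m - b).choose a) = (m.choose a) * ((m - a).choose b) := by
    exact_mod_cast hid.symm
  push_cast at e1 e2
  rw [e1, e2, hc, ← add_div, div_le_one (by positivity)]
  exact_mod_cast hcard

lemma shadow_sub (n k : ℕ) (F : Finset (Finset ℕ))
    (hFsub : ∀ X ∈ F, X ⊆ Finset.Icc 1 n ∧ X.card = k) (U S : Finset ℕ) :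
    (F.filter fun X => X ∩ U = S).image (· \ U)
      ⊆ (Finset.Icc 1 n \ U).powersetCard (k - S.card) := by
  intro T hT
  simp only [Finset.mem_image, Finset.mem_filter] at hT
  obtain ⟨X, ⟨hXF, hXU⟩, rfl⟩ := hT
  obtain ⟨hX1, hX2⟩ := hFsub X hXF
  rw [Finset.mem_powersetCard]
  constructor
  · intro x hx
    rw [Finset.mem_sdiff] at hx ⊢
    exact ⟨hX1 hx.1, hx.2⟩
  · have := Finset.card_sdiff_add_card_inter X U
    rw [hXU, hX2] at this
    omega

lemma shadow_card (F : Finset (Finset ℕ)) (U S : Finset ℕ) :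
    ((F.filter fun X => X ∩ U = S).image (· \ U)).card
      = (F.filter fun X => X ∩ U = S).card := by
  apply Finset.card_image_of_injOn
  intro X hX Y hY hXY
  simp only [Finset.coe_filter, Set.mem_setOf_eq] at hX hY
  have : X \ U ∪ X ∩ U = Y \ U ∪ Y ∩ U := by
    rw [hX.2, hY.2]
    exact congrArg (· ∪ S) hXY
  rwa [Finset.sdiff_union_inter, Finset.sdiff_union_inter] at this

lemma V_card (n : ℕ) (U : Finset ℕ) (hU : U ⊆ Finset.Icc 1 n) :
    (Finset.Icc 1 n \ U).card = n - U.card := by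
  rw [Finset.card_sdiff_of_subset hU, Nat.card_Icc]
  omega

lemma single_bound (n k : ℕ) (F : Finset (Finset ℕ))
    (hFsub : ∀ X ∈ F, X ⊆ Finset.Icc 1 n ∧ X.card = k) (U : Finset ℕ)
    (hU : U ⊆ Finset.Icc 1 n) (S : Finset ℕ) :
    ((F.filter fun X => X ∩ U = S).card : ℚ) / ((n - U.card).choose (k - S.card)) ≤ 1 := by
  have hle : (F.filter fun X => X ∩ U = S).card ≤ (n - U.card).choose (k - S.card) := by
    rw [← shadow_card F U S, ← V_card n U hU, ← Finset.card_powersetCard]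
    exact Finset.card_le_card (shadow_sub n k F hFsub U S)
  rcases Nat.eq_zero_or_pos ((n - U.card).choose (k - S.card)) with h0 | hpos
  · rw [h0] at hle ⊢
    interval_cases h : (F.filter fun X => X ∩ U = S).card
    simp
  · rw [div_le_one (by exact_mod_cast hpos)]
    exact_mod_cast hle

/-- Sperner-type averaging inequality: for an intersecting family `F ⊆ ([n] choose k)`,
`U ⊆ [n]`, disjoint `A, B ⊆ U`, and `n ≥ 2k - |A| - |B| + |U|`,
`f_A / C(n-|U|, k-|A|) + f_B / C(n-|U|, k-|B|) ≤ 1`. -/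
theorem sperner_averaging
    (n k : ℕ) (F : Finset (Finset ℕ))
    (hFsub : ∀ X ∈ F, X ⊆ Finset.Icc 1 n ∧ X.card = k)
    (hint : ∀ X ∈ F, ∀ X' ∈ F, (X ∩ X').Nonempty)
    (U : Finset ℕ) (hU : U ⊆ Finset.Icc 1 n)
    (A B : Finset ℕ) (hA : A ⊆ U) (hB : B ⊆ U) (hdisj : A ∩ B = ∅)
    (hn : 2 * k + U.card ≤ n + A.card + B.card) :
    ((F.filter (fun X => X ∩ U = A)).card : ℚ) / ((n - U.card).choose (k - A.card)) +
      ((F.filter (fun X => X ∩ U = B)).card : ℚ) / ((n - U.card).choose (k - B.card))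
      ≤ 1 := by
  have hUn : U.card ≤ n := by
    have := Finset.card_le_card hU
    rwa [Nat.card_Icc, Nat.add_sub_cancel] at this
  -- helper: if S.card > k the filter is empty
  have hempty : ∀ S : Finset ℕ, k < S.card → (F.filter fun X => X ∩ U = S) = ∅ := by
    intro S hSk
    rw [Finset.filter_eq_empty_iff]
    intro X hX hXS
    have h1 : (X ∩ U).card ≤ X.card := Finset.card_le_card (Finset.inter_subset_left)
    rw [hXS, (hFsub X hX).2] at h1
    omega
  by_cases hAk : A.card ≤ k
  · by_cases hBk : B.card ≤ k
    · -- main case: use cross_ineq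
      set V := Finset.Icc 1 n \ U with hV
      have hVc : V.card = n - U.card := V_card n U hU
      have hcross : ∀ S₁ ∈ (F.filter fun X => X ∩ U = A).image (· \ U),
          ∀ S₂ ∈ (F.filter fun X => X ∩ U = B).image (· \ U), (S₁ ∩ S₂).Nonempty := by
        intro S₁ hS₁ S₂ hS₂
        simp only [Finset.mem_image, Finset.mem_filter] at hS₁ hS₂
        obtain ⟨X, ⟨hXF, hXU⟩, rfl⟩ := hS₁
        obtain ⟨Y, ⟨hYF, hYU⟩, rfl⟩ := hS₂
        obtain ⟨z, hz⟩ := hint X hXF Y hYF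
        rw [Finset.mem_inter] at hz
        have hzU : z ∉ U := by
          intro hzu
          have hzA : z ∈ A := by rw [← hXU, Finset.mem_inter]; exact ⟨hz.1, hzu⟩
          have hzB : z ∈ B := by rw [← hYU, Finset.mem_inter]; exact ⟨hz.2, hzu⟩
          have : z ∈ A ∩ B := Finset.mem_inter.mpr ⟨hzA, hzB⟩
          rw [hdisj] at this
          exact absurd this (Finset.notMem_empty z)
        exact ⟨z, by simp [Finset.mem_inter, Finset.mem_sdiff, hz.1, hz.2, hzU]⟩
      have hab : (k - A.card) + (k - B.card) ≤ V.card := by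
        rw [hVc]; omega
      have := cross_ineq V (k - A.card) (k - B.card)
        ((F.filter fun X => X ∩ U = A).image (· \ U))
        ((F.filter fun X => X ∩ U = B).image (· \ U))
        (shadow_sub n k F hFsub U A) (shadow_sub n k F hFsub U B) hcross hab
      rwa [shadow_card, shadow_card, hVc] at this
    · -- B.card > k: second filter empty
      rw [hempty B (by omega)]
      simpa using single_bound n k F hFsub U hU A
  · -- A.card > k: first filter empty
    rw [hempty A (by omega)]
    simpa using single_bound n k F hFsub U hU B
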